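/- Let $n, m$ be integers with $1 < m \le n$ and $V = \mathbb R^n$. Let $H = \bigcup_{k=1}^m \{x \in V : x_j = 0 \text{ for } 1 \le j < k \text{ and } x_k > 0\}$, $H_+ = \{x \in H : x_1 > 0\}$, $H_0 = \{x \in H : x_1 = 0\}$. Define the total preorder $\preceq$ on $H$ by: all of $H_0$ is one equivalence class with $H_+ \prec H_0$, and for $x, y \in H_+$, $x \prec y$ iff there exists $2 \le k \le m$ with $x_j/x_1 = y_j/y_1$ for $2 \le j < k$ and $x_k/x_1 < y_k/y_1$. Then $\preceq$ is a convex preorder on $H$, and moreover $\dim \operatorname{span}_{\mathbb R}\mathcal C < n$ for every $\preceq$-equivalence class $\mathcal C$. -/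

import Mathlib

open scoped BigOperators

/-- `nnspan S` is the set of finite linear combinations of elements of `S`
with non-negative real coefficients (by convention `nnspan ∅ = {0}`). -/
def nnspan {V : Type*} [AddCommGroup V] [Module ℝ V] (S : Set V) : Set V :=
  {x | ∃ (n : ℕ) (c : Fin n → ℝ) (v : Fin n → V),
    (∀ i, 0 ≤ c i) ∧ (∀ i, v i ∈ S) ∧ x = ∑ i, c i • v i}

/-- Minkowski sum of two subsets of `V`. -/
def setAdd {V : Type*} [AddCommGroup V] [Module ℝ V] (A B : Set V) : Set V :=
  {z | ∃ a ∈ A, ∃ b ∈ B, z = a + b}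

/-- Elements of `X` strictly below `x` for the preorder `le`. -/
def strictBelow {V : Type*} [AddCommGroup V] [Module ℝ V]
    (le : V → V → Prop) (x : V) (X : Set V) : Set V :=
  {y ∈ X | le y x ∧ ¬ le x y}

/-- Elements of `X` strictly above `x` for the preorder `le`. -/
def strictAbove {V : Type*} [AddCommGroup V] [Module ℝ V]
    (le : V → V → Prop) (x : V) (X : Set V) : Set V :=
  {y ∈ X | le x y ∧ ¬ le y x}

/-- The `le`-equivalence class of `x` inside `X`. -/
def eqClass {V : Type*} [AddCommGroup V] [Module ℝ V]
    (le : V → V → Prop) (x : V) (X : Set V) : Set V :=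
  {y ∈ X | le x y ∧ le y x}

/-- A convex preorder on `X ⊆ V \ {0}`: a total preorder on `X` such that for every
equivalence class `𝒞`, the triple (strictly below `𝒞`, `𝒞`, strictly above `𝒞`) is a
face, i.e. for any non-negative combinations `x₋` (of the strictly-below set) and `x₊`
(of the strictly-above set) with `x₋ - x₊ ∈ span ℝ 𝒞`, one has `x₋ = x₊ = 0`. -/
def IsConvexPreorder {V : Type*} [AddCommGroup V] [Module ℝ V]
    (X : Set V) (le : V → V → Prop) : Prop :=
  (∀ x ∈ X, le x x) ∧
  (∀ x ∈ X, ∀ y ∈ X, ∀ z ∈ X, le x y → le y z → le x z) ∧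
  (∀ x ∈ X, ∀ y ∈ X, le x y ∨ le y x) ∧
  (∀ x ∈ X, ∀ xm ∈ nnspan (strictBelow le x X), ∀ xp ∈ nnspan (strictAbove le x X),
    xm - xp ∈ Submodule.span ℝ (eqClass le x X) → xm = 0 ∧ xp = 0)

/-- The set `H ⊆ ℝⁿ` : union over `k = 1, …, m` (here 0-indexed: `k < m`) of the sets
`{x : x_j = 0 for j < k and x_k > 0}`. -/
def Hset (n m : ℕ) : Set (Fin n → ℝ) :=
  {x | ∃ k : Fin n, (k : ℕ) < m ∧ (∀ j : Fin n, j < k → x j = 0) ∧ 0 < x k}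

/-- The total preorder on `Hset n m` from the paper: `H₀` (first coordinate zero) is a
single equivalence class, `H₊ ≺ H₀`, and on `H₊` a lexicographic comparison of the
ratios `x_j / x_1` for `2 ≤ j ≤ m` (0-indexed: `1 ≤ j < m`). -/
def leH (n m : ℕ) (hn : 0 < n) (x y : Fin n → ℝ) : Prop :=
  (x ⟨0, hn⟩ = 0 ∧ y ⟨0, hn⟩ = 0) ∨
  (0 < x ⟨0, hn⟩ ∧ y ⟨0, hn⟩ = 0) ∨
  (0 < x ⟨0, hn⟩ ∧ 0 < y ⟨0, hn⟩ ∧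
    ((∀ j : Fin n, 0 < (j : ℕ) → (j : ℕ) < m → x j / x ⟨0, hn⟩ = y j / y ⟨0, hn⟩) ∨
     (∃ k : Fin n, 0 < (k : ℕ) ∧ (k : ℕ) < m ∧
        (∀ j : Fin n, 0 < (j : ℕ) → j < k → x j / x ⟨0, hn⟩ = y j / y ⟨0, hn⟩) ∧
        x k / x ⟨0, hn⟩ < y k / y ⟨0, hn⟩)))

section Helpers

variable {n m : ℕ}

lemma mem_nnspan_empty {V : Type*} [AddCommGroup V] [Module ℝ V] {x : V}
    (hx : x ∈ nnspan (∅ : Set V)) : x = 0 := by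
  obtain ⟨N, c, v, _, hv, rfl⟩ := hx
  haveI : IsEmpty (Fin N) := ⟨fun i => (hv i)⟩
  simp

lemma hset_cases (hn : 0 < n) {x : Fin n → ℝ} (hx : x ∈ Hset n m) :
    0 < x ⟨0, hn⟩ ∨ (x ⟨0, hn⟩ = 0 ∧ ∃ k : Fin n, 0 < (k : ℕ) ∧ (k : ℕ) < m ∧
      (∀ j : Fin n, j < k → x j = 0) ∧ 0 < x k) := by
  obtain ⟨k, hkm, hz, hp⟩ := hx
  rcases Nat.eq_zero_or_pos (k : ℕ) with h0 | h0
  · left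
    have hk : k = ⟨0, hn⟩ := Fin.ext h0
    rwa [hk] at hp
  · right
    exact ⟨hz ⟨0, hn⟩ h0, k, h0, hkm, hz, hp⟩

lemma lex_core {ι : Type*} [Fintype ι]
    (e : ι → ℝ) (F : ι → Fin n → ℝ) (k : ι → Fin n)
    (he : ∀ i, 0 ≤ e i)
    (hk0 : ∀ i, 0 < (k i : ℕ)) (hkm : ∀ i, (k i : ℕ) < m)
    (hF0 : ∀ i, ∀ j : Fin n, 0 < (j : ℕ) → j < k i → F i j = 0)
    (hFneg : ∀ i, F i (k i) < 0)
    (hsum : ∀ j : Fin n, 0 < (j : ℕ) → (j : ℕ) < m → ∑ i, e i * F i j = 0) :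
    ∀ i, e i = 0 := by
  by_contra h
  push_neg at h
  obtain ⟨i₀, hi₀⟩ := h
  have hi₀' : 0 < e i₀ := lt_of_le_of_ne (he i₀) (Ne.symm hi₀)
  set S : Finset ι := Finset.univ.filter (fun i => 0 < e i) with hS
  have hne : S.Nonempty := ⟨i₀, by simp [hS, hi₀']⟩
  obtain ⟨i₁, hi₁S, hmin⟩ := S.exists_min_image k hne
  have hi₁pos : 0 < e i₁ := by simpa [hS] using hi₁S
  have hsum0 := hsum (k i₁) (hk0 i₁) (hkm i₁)
  have hlt : ∑ i, e i * F i (k i₁) < ∑ _i : ι, (0 : ℝ) := by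
    apply Finset.sum_lt_sum
    · intro i _
      rcases eq_or_lt_of_le (he i) with h0 | hpos
      · simp [← h0]
      · have hiS : i ∈ S := by simp [hS, hpos]
        rcases lt_or_eq_of_le (hmin i hiS) with hlt' | heq
        · rw [hF0 i (k i₁) (hk0 i₁) hlt', mul_zero]
        · rw [heq]
          exact le_of_lt (mul_neg_of_pos_of_neg hpos (hFneg i))
    · refine ⟨i₁, Finset.mem_univ i₁, ?_⟩
      exact mul_neg_of_pos_of_neg hi₁pos (hFneg i₁)
  rw [Finset.sum_const_zero, hsum0] at hlt
  exact lt_irrefl _ hlt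

end Helpers
section Order

variable {n m : ℕ}

lemma leH_trans' (hn : 0 < n) {x y z : Fin n → ℝ}
    (hxy : leH n m hn x y) (hyz : leH n m hn y z) : leH n m hn x z := by
  unfold leH at *
  rcases hxy with ⟨hx0, hy0⟩ | ⟨hx0, hy0⟩ | ⟨hx0, hy0, hxy⟩
  · rcases hyz with ⟨_, hz0⟩ | ⟨hy0', _⟩ | ⟨hy0', _⟩
    · exact Or.inl ⟨hx0, hz0⟩
    · exfalso; linarith
    · exfalso; linarith
  · rcases hyz with ⟨_, hz0⟩ | ⟨hy0', _⟩ | ⟨hy0', _, _⟩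
    · exact Or.inr (Or.inl ⟨hx0, hz0⟩)
    · exfalso; linarith
    · exfalso; linarith
  · rcases hyz with ⟨hy0', _⟩ | ⟨_, hz0⟩ | ⟨_, hz0, hyz⟩
    · exfalso; linarith
    · exact Or.inr (Or.inl ⟨hx0, hz0⟩)
    · refine Or.inr (Or.inr ⟨hx0, hz0, ?_⟩)
      rcases hxy with heq1 | ⟨k1, hk10, hk1m, he1, hl1⟩
      · rcases hyz with heq2 | ⟨k2, hk20, hk2m, he2, hl2⟩
        · exact Or.inl fun j hj hjm => (heq1 j hj hjm).trans (heq2 j hj hjm)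
        · refine Or.inr ⟨k2, hk20, hk2m, fun j hj hjk => ?_, ?_⟩
          · exact (heq1 j hj (Nat.lt_trans hjk hk2m)).trans (he2 j hj hjk)
          · rw [heq1 k2 hk20 hk2m]; exact hl2
      · rcases hyz with heq2 | ⟨k2, hk20, hk2m, he2, hl2⟩
        · refine Or.inr ⟨k1, hk10, hk1m, fun j hj hjk =>
            (he1 j hj hjk).trans (heq2 j hj (Nat.lt_trans hjk hk1m)), ?_⟩
          rw [← heq2 k1 hk10 hk1m]; exact hl1
        · rcases lt_trichotomy k1 k2 with hlt | heqk | hgt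
          · refine Or.inr ⟨k1, hk10, hk1m, fun j hj hjk =>
              (he1 j hj hjk).trans (he2 j hj (lt_trans hjk hlt)), ?_⟩
            rw [← he2 k1 hk10 hlt]; exact hl1
          · subst heqk
            exact Or.inr ⟨k1, hk10, hk1m, fun j hj hjk =>
              (he1 j hj hjk).trans (he2 j hj hjk), lt_trans hl1 hl2⟩
          · refine Or.inr ⟨k2, hk20, hk2m, fun j hj hjk =>
              (he1 j hj (lt_trans hjk hgt)).trans (he2 j hj hjk), ?_⟩
            rw [he1 k2 hk20 hgt]; exact hl2

lemma leH_refl' (hn : 0 < n) {x : Fin n → ℝ} (hx : x ∈ Hset n m) : leH n m hn x x := by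
  rcases hset_cases hn hx with h | ⟨h, _⟩
  · exact Or.inr (Or.inr ⟨h, h, Or.inl fun _ _ _ => rfl⟩)
  · exact Or.inl ⟨h, h⟩

lemma leH_total' (hn : 0 < n) {x y : Fin n → ℝ} (hx : x ∈ Hset n m) (hy : y ∈ Hset n m) :
    leH n m hn x y ∨ leH n m hn y x := by
  rcases hset_cases hn hx with hx0 | ⟨hx0, _⟩ <;>
    rcases hset_cases hn hy with hy0 | ⟨hy0, _⟩
  · -- both positive : lex totality
    by_cases hall : ∀ j : Fin n, 0 < (j : ℕ) → (j : ℕ) < m →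
        x j / x ⟨0, hn⟩ = y j / y ⟨0, hn⟩
    · exact Or.inl (Or.inr (Or.inr ⟨hx0, hy0, Or.inl hall⟩))
    · push_neg at hall
      obtain ⟨j0, hj00, hj0m, hj0ne⟩ := hall
      set S : Finset (Fin n) := Finset.univ.filter
        (fun j => 0 < (j : ℕ) ∧ (j : ℕ) < m ∧ x j / x ⟨0, hn⟩ ≠ y j / y ⟨0, hn⟩) with hS
      have hne : S.Nonempty := ⟨j0, by simp [hS, hj00, hj0m, hj0ne]⟩
      obtain ⟨k, hkS, hmin⟩ := S.exists_min_image id hne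
      have hk : 0 < (k : ℕ) ∧ (k : ℕ) < m ∧ x k / x ⟨0, hn⟩ ≠ y k / y ⟨0, hn⟩ := by
        simpa [hS] using hkS
      have heqall : ∀ j : Fin n, 0 < (j : ℕ) → j < k →
          x j / x ⟨0, hn⟩ = y j / y ⟨0, hn⟩ := by
        intro j hj hjk
        by_contra hne'
        have hjS : j ∈ S := by
          simp only [hS, Finset.mem_filter, Finset.mem_univ, true_and]
          exact ⟨hj, Nat.lt_trans hjk hk.2.1, hne'⟩
        exact absurd (hmin j hjS) (not_le.mpr hjk)
      rcases lt_or_gt_of_ne hk.2.2 with h | h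
      · exact Or.inl (Or.inr (Or.inr ⟨hx0, hy0,
          Or.inr ⟨k, hk.1, hk.2.1, heqall, h⟩⟩))
      · exact Or.inr (Or.inr (Or.inr ⟨hy0, hx0,
          Or.inr ⟨k, hk.1, hk.2.1, fun j hj hjk => (heqall j hj hjk).symm, h⟩⟩))
  · exact Or.inl (Or.inr (Or.inl ⟨hx0, hy0⟩))
  · exact Or.inr (Or.inr (Or.inl ⟨hy0, hx0⟩))
  · exact Or.inl (Or.inl ⟨hx0, hy0⟩)

end Order
section Classify

variable {n m : ℕ}

lemma eqClass_pos (hn : 0 < n) {x y : Fin n → ℝ} (hx0 : 0 < x ⟨0, hn⟩)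
    (hy : y ∈ eqClass (leH n m hn) x (Hset n m)) :
    0 < y ⟨0, hn⟩ ∧ ∀ j : Fin n, 0 < (j : ℕ) → (j : ℕ) < m →
      y j - (x j / x ⟨0, hn⟩) * y ⟨0, hn⟩ = 0 := by
  obtain ⟨hyH, hxy, hyx⟩ := hy
  rcases hxy with ⟨hx0', _⟩ | ⟨_, hy0⟩ | ⟨_, hy0pos, h3⟩
  · exfalso; linarith
  · exfalso
    rcases hyx with ⟨_, hx0'⟩ | ⟨hy0', _⟩ | ⟨hy0', _, _⟩ <;> linarith
  · refine ⟨hy0pos, ?_⟩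
    have hratio : ∀ j : Fin n, 0 < (j : ℕ) → (j : ℕ) < m →
        x j / x ⟨0, hn⟩ = y j / y ⟨0, hn⟩ := by
      rcases h3 with heq | ⟨k1, hk10, hk1m, he1, hl1⟩
      · exact heq
      · exfalso
        rcases hyx with ⟨hy0', _⟩ | ⟨_, hx0'⟩ | ⟨_, _, h3'⟩
        · linarith
        · linarith
        · rcases h3' with heq' | ⟨k2, hk20, hk2m, he2, hl2⟩
          · have := heq' k1 hk10 hk1m; linarith
          · rcases lt_trichotomy k1 k2 with hlt | heqk | hgt
            · have := he2 k1 hk10 hlt; linarith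
            · subst heqk; linarith
            · have := he1 k2 hk20 hgt; linarith
    intro j hj hjm
    have h1 : x j / x ⟨0, hn⟩ = y j / y ⟨0, hn⟩ := hratio j hj hjm
    have h2 : y j = (x j / x ⟨0, hn⟩) * y ⟨0, hn⟩ :=
      (div_eq_iff hy0pos.ne').mp h1.symm
    linarith

lemma below_pos (hn : 0 < n) {x u : Fin n → ℝ} (hx0 : 0 < x ⟨0, hn⟩)
    (hu : u ∈ strictBelow (leH n m hn) x (Hset n m)) :
    ∃ k : Fin n, 0 < (k : ℕ) ∧ (k : ℕ) < m ∧
      (∀ j : Fin n, 0 < (j : ℕ) → j < k → u j - (x j / x ⟨0, hn⟩) * u ⟨0, hn⟩ = 0) ∧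
      u k - (x k / x ⟨0, hn⟩) * u ⟨0, hn⟩ < 0 := by
  obtain ⟨huH, hux, hnxu⟩ := hu
  rcases hux with ⟨_, hx0'⟩ | ⟨_, hx0'⟩ | ⟨hu0, _, h3⟩
  · exfalso; linarith
  · exfalso; linarith
  · rcases h3 with heq | ⟨k, hk0, hkm, he, hl⟩
    · exact absurd (Or.inr (Or.inr ⟨hx0, hu0, Or.inl
        (fun j hj hjm => (heq j hj hjm).symm)⟩)) hnxu
    · refine ⟨k, hk0, hkm, fun j hj hjk => ?_, ?_⟩
      · have h2 : u j = (x j / x ⟨0, hn⟩) * u ⟨0, hn⟩ :=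
          (div_eq_iff hu0.ne').mp (he j hj hjk)
        linarith
      · have h2 : u k < (x k / x ⟨0, hn⟩) * u ⟨0, hn⟩ :=
          (div_lt_iff₀ hu0).mp hl
        linarith

lemma above_pos (hn : 0 < n) {x w : Fin n → ℝ} (hx0 : 0 < x ⟨0, hn⟩)
    (hw : w ∈ strictAbove (leH n m hn) x (Hset n m)) :
    ∃ k : Fin n, 0 < (k : ℕ) ∧ (k : ℕ) < m ∧
      (∀ j : Fin n, 0 < (j : ℕ) → j < k → w j - (x j / x ⟨0, hn⟩) * w ⟨0, hn⟩ = 0) ∧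
      0 < w k - (x k / x ⟨0, hn⟩) * w ⟨0, hn⟩ := by
  obtain ⟨hwH, hxw, hnwx⟩ := hw
  rcases hxw with ⟨hx0', _⟩ | ⟨_, hw0⟩ | ⟨_, hw0pos, h3⟩
  · exfalso; linarith
  · rcases hset_cases hn hwH with hw0' | ⟨_, k, hk0, hkm, hz, hp⟩
    · exfalso; linarith
    · refine ⟨k, hk0, hkm, fun j hj hjk => ?_, ?_⟩
      · rw [hz j hjk, hw0]; ring
      · rw [hw0, mul_zero, sub_zero]; exact hp
  · rcases h3 with heq | ⟨k, hk0, hkm, he, hl⟩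
    · exact absurd (Or.inr (Or.inr ⟨hw0pos, hx0, Or.inl
        (fun j hj hjm => (heq j hj hjm).symm)⟩)) hnwx
    · refine ⟨k, hk0, hkm, fun j hj hjk => ?_, ?_⟩
      · have h2 : w j = (x j / x ⟨0, hn⟩) * w ⟨0, hn⟩ :=
          (div_eq_iff hw0pos.ne').mp (he j hj hjk).symm
        linarith
      · have h2 : (x k / x ⟨0, hn⟩) * w ⟨0, hn⟩ < w k :=
          (lt_div_iff₀ hw0pos).mp hl
        linarith

lemma above_zero (hn : 0 < n) {x : Fin n → ℝ} (hx0 : x ⟨0, hn⟩ = 0) :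
    strictAbove (leH n m hn) x (Hset n m) = ∅ := by
  ext y
  simp only [strictAbove, Set.mem_setOf_eq, Set.mem_empty_iff_false, iff_false, not_and]
  rintro hyH hxy hnyx
  rcases hxy with ⟨_, hy0⟩ | ⟨hx0', _⟩ | ⟨hx0', _⟩
  · exact hnyx (Or.inl ⟨hy0, hx0⟩)
  · linarith
  · linarith

lemma below_zero (hn : 0 < n) {x u : Fin n → ℝ} (hx0 : x ⟨0, hn⟩ = 0)
    (hu : u ∈ strictBelow (leH n m hn) x (Hset n m)) : 0 < u ⟨0, hn⟩ := by
  obtain ⟨huH, hux, hnxu⟩ := hu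
  rcases hux with ⟨hu0, _⟩ | ⟨hu0, _⟩ | ⟨_, hx0'⟩
  · exact absurd (Or.inl ⟨hx0, hu0⟩) hnxu
  · exact hu0
  · exfalso; linarith [hx0'.1]

lemma eqClass_zero (hn : 0 < n) {x y : Fin n → ℝ} (hx0 : x ⟨0, hn⟩ = 0)
    (hy : y ∈ eqClass (leH n m hn) x (Hset n m)) : y ⟨0, hn⟩ = 0 := by
  obtain ⟨hyH, hxy, hyx⟩ := hy
  rcases hxy with ⟨_, hy0⟩ | ⟨hx0', _⟩ | ⟨hx0', _⟩
  · exact hy0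
  · exfalso; linarith
  · exfalso; linarith

end Classify
/-- For `1 < m ≤ n`, the preorder `leH` is a convex preorder on
`Hset n m ⊆ ℝⁿ`, and every equivalence class spans a proper subspace of `ℝⁿ`. -/
theorem leH_isConvexPreorder (n m : ℕ) (hm : 1 < m) (hmn : m ≤ n) :
    IsConvexPreorder (Hset n m) (leH n m (by omega)) ∧
    ∀ x ∈ Hset n m,
      Module.finrank ℝ
        (Submodule.span ℝ (eqClass (leH n m (by omega)) x (Hset n m))) < n := by
  have hn : 0 < n := by omega
  have hconvex : ∀ x ∈ Hset n m, ∀ xm ∈ nnspan (strictBelow (leH n m hn) x (Hset n m)),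
      ∀ xp ∈ nnspan (strictAbove (leH n m hn) x (Hset n m)),
      xm - xp ∈ Submodule.span ℝ (eqClass (leH n m hn) x (Hset n m)) →
      xm = 0 ∧ xp = 0 := by
    intro x hx xm hxm xp hxp hspan
    rcases hset_cases hn hx with hx0 | ⟨hx0, _⟩
    · -- x₀ > 0 : lexicographic argument
      set φ : Fin n → (Fin n → ℝ) →ₗ[ℝ] ℝ :=
        fun j => LinearMap.proj j - (x j / x ⟨0, hn⟩) • LinearMap.proj ⟨0, hn⟩ with hφdef
      have hφ : ∀ (j : Fin n) (y : Fin n → ℝ),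
          φ j y = y j - (x j / x ⟨0, hn⟩) * y ⟨0, hn⟩ := by
        intro j y
        simp [hφdef, smul_eq_mul]
      have hker : ∀ j : Fin n, 0 < (j : ℕ) → (j : ℕ) < m →
          Submodule.span ℝ (eqClass (leH n m hn) x (Hset n m)) ≤ LinearMap.ker (φ j) := by
        intro j hj hjm
        rw [Submodule.span_le]
        intro y hy
        have := (eqClass_pos hn hx0 hy).2 j hj hjm
        simp only [SetLike.mem_coe, LinearMap.mem_ker, hφ]
        exact this
      have hphi : ∀ j : Fin n, 0 < (j : ℕ) → (j : ℕ) < m → φ j xm - φ j xp = 0 := by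
        intro j hj hjm
        have := hker j hj hjm hspan
        rw [LinearMap.mem_ker, map_sub] at this
        exact this
      obtain ⟨N1, c, u, hc, hu, hxmeq⟩ := hxm
      obtain ⟨N2, d, w, hd, hw, hxpeq⟩ := hxp
      have hub := fun i => below_pos hn hx0 (hu i)
      choose ku hku0 hkum hkue hkul using hub
      have hwb := fun i => above_pos hn hx0 (hw i)
      choose kw hkw0 hkwm hkwe hkwl using hwb
      set e : Fin N1 ⊕ Fin N2 → ℝ := Sum.elim c d with hedef
      set F : Fin N1 ⊕ Fin N2 → Fin n → ℝ :=
        Sum.elim (fun i j => φ j (u i)) (fun i j => -(φ j (w i))) with hFdef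
      set K : Fin N1 ⊕ Fin N2 → Fin n := Sum.elim ku kw with hKdef
      have hzero : ∀ i, e i = 0 := by
        apply lex_core (m := m) e F K
        · rintro (i | i)
          · exact hc i
          · exact hd i
        · rintro (i | i)
          · exact hku0 i
          · exact hkw0 i
        · rintro (i | i)
          · exact hkum i
          · exact hkwm i
        · rintro (i | i) j hj hjk
          · simp only [hFdef, Sum.elim_inl, hφ]
            exact hkue i j hj hjk
          · simp only [hFdef, Sum.elim_inr, hφ, neg_eq_zero]
            exact hkwe i j hj hjk
        · rintro (i | i)
          · simp only [hFdef, hKdef, Sum.elim_inl, hφ]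
            exact hkul i
          · simp only [hFdef, hKdef, Sum.elim_inr, hφ]
            linarith [hkwl i]
        · intro j hj hjm
          have h1 : φ j xm = ∑ i, c i * φ j (u i) := by
            rw [hxmeq, map_sum]
            exact Finset.sum_congr rfl fun i _ => by rw [map_smul, smul_eq_mul]
          have h2 : φ j xp = ∑ i, d i * φ j (w i) := by
            rw [hxpeq, map_sum]
            exact Finset.sum_congr rfl fun i _ => by rw [map_smul, smul_eq_mul]
          rw [Fintype.sum_sum_type]
          simp only [hedef, hFdef, Sum.elim_inl, Sum.elim_inr]
          have h3 : ∑ i : Fin N2, d i * -φ j (w i) = -∑ i : Fin N2, d i * φ j (w i) := by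
            rw [← Finset.sum_neg_distrib]
            exact Finset.sum_congr rfl fun i _ => by ring
          rw [h3, ← h1, ← h2]
          have := hphi j hj hjm
          linarith
      have hc0 : ∀ i, c i = 0 := fun i => hzero (Sum.inl i)
      have hd0 : ∀ i, d i = 0 := fun i => hzero (Sum.inr i)
      constructor
      · rw [hxmeq]
        exact Finset.sum_eq_zero fun i _ => by rw [hc0 i, zero_smul]
      · rw [hxpeq]
        exact Finset.sum_eq_zero fun i _ => by rw [hd0 i, zero_smul]
    · -- x₀ = 0
      have hxp0 : xp = 0 := mem_nnspan_empty (above_zero hn hx0 ▸ hxp)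
      refine ⟨?_, hxp0⟩
      set ψ : (Fin n → ℝ) →ₗ[ℝ] ℝ := LinearMap.proj ⟨0, hn⟩ with hψdef
      have hker : Submodule.span ℝ (eqClass (leH n m hn) x (Hset n m)) ≤
          LinearMap.ker ψ := by
        rw [Submodule.span_le]
        intro y hy
        simp only [SetLike.mem_coe, LinearMap.mem_ker, hψdef, LinearMap.proj_apply]
        exact eqClass_zero hn hx0 hy
      have hψ0 : ψ xm = 0 := by
        have := hker hspan
        rw [LinearMap.mem_ker, map_sub, hxp0, map_zero, sub_zero] at this
        exact this
      obtain ⟨N1, c, u, hc, hu, hxmeq⟩ := hxm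
      have hsum : ∑ i : Fin N1, c i * u i ⟨0, hn⟩ = 0 := by
        rw [← hψ0, hxmeq, map_sum]
        exact (Finset.sum_congr rfl fun i _ => by
          rw [map_smul, smul_eq_mul, hψdef, LinearMap.proj_apply]).symm
      have hc0 : ∀ i, c i = 0 := by
        intro i
        have hpos : ∀ i, 0 < u i ⟨0, hn⟩ := fun i => below_zero hn hx0 (hu i)
        have := (Finset.sum_eq_zero_iff_of_nonneg
          (fun i _ => mul_nonneg (hc i) (hpos i).le)).mp hsum i (Finset.mem_univ i)
        rcases mul_eq_zero.mp this with h | h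
        · exact h
        · exact absurd h (hpos i).ne'
      rw [hxmeq]
      exact Finset.sum_eq_zero fun i _ => by rw [hc0 i, zero_smul]
  refine ⟨⟨fun x hx => leH_refl' hn hx,
    fun x _ y _ z _ hxy hyz => leH_trans' hn hxy hyz,
    fun x hx y hy => leH_total' hn hx hy, hconvex⟩, ?_⟩
  -- finrank part
  intro x hx
  have key : ∃ φ : (Fin n → ℝ) →ₗ[ℝ] ℝ, φ ≠ 0 ∧
      Submodule.span ℝ (eqClass (leH n m hn) x (Hset n m)) ≤ LinearMap.ker φ := by
    rcases hset_cases hn hx with hx0 | ⟨hx0, _⟩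
    · set j1 : Fin n := ⟨1, by omega⟩ with hj1def
      refine ⟨LinearMap.proj j1 - (x j1 / x ⟨0, hn⟩) • LinearMap.proj ⟨0, hn⟩, ?_, ?_⟩
      · intro h0
        have h1 := congrFun (congrArg DFunLike.coe h0) (Pi.single j1 1)
        have hne : (⟨0, hn⟩ : Fin n) ≠ j1 := by
          intro h; exact absurd (congrArg Fin.val h) (by simp [hj1def])
        simp [Pi.single_eq_of_ne hne, hne] at h1
      · rw [Submodule.span_le]
        intro y hy
        have := (eqClass_pos hn hx0 hy).2 j1 (by simp [hj1def]) (by simp [hj1def]; omega)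
        simp only [SetLike.mem_coe, LinearMap.mem_ker, LinearMap.sub_apply,
          LinearMap.smul_apply, LinearMap.proj_apply, smul_eq_mul]
        linarith
    · refine ⟨LinearMap.proj ⟨0, hn⟩, ?_, ?_⟩
      · intro h0
        have h1 := congrFun (congrArg DFunLike.coe h0) (fun _ => (1 : ℝ))
        simp at h1
      · rw [Submodule.span_le]
        intro y hy
        simp only [SetLike.mem_coe, LinearMap.mem_ker, LinearMap.proj_apply]
        exact eqClass_zero hn hx0 hy
  obtain ⟨φ, hφne, hle⟩ := key
  have hltTop : Submodule.span ℝ (eqClass (leH n m hn) x (Hset n m)) < ⊤ := by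
    refine lt_of_le_of_lt hle ?_
    rw [lt_top_iff_ne_top]
    intro h
    exact hφne (LinearMap.ker_eq_top.mp h)
  have := Submodule.finrank_lt hltTop.ne
  rwa [Module.finrank_fin_fun] at this
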